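/- Let A be an integral domain, ⋆ a star operation of finite type on A, and a a nonzero element of A. Assume there exists a finite collection ℱ ∈ Σ^⋆_a that is a maximal element of the poset ((Σ')^⋆_a, ⊆). Then the set of ⋆-maximal ideals of A containing a equals {𝔪_𝔞 : 𝔞 ∈ ℱ}, where 𝔪_𝔞 := {x ∈ A : ((x) + 𝔞)^⋆ ≠ A}; in particular, only finitely many ⋆-maximal ideals of A contain a. -/

import Mathlib

open scoped nonZeroDivisors

/-- A star operation on an integral domain `A` with quotient field `K`: a map on
(nonzero) fractional ideals satisfying `A^⋆ = A`, `(xI)^⋆ = x·I^⋆`, `I ⊆ I^⋆`,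
monotonicity and idempotency. -/
structure StarOperation (A : Type*) [CommRing A] [IsDomain A]
    (K : Type*) [Field K] [Algebra A K] [IsFractionRing A K] where
  star : FractionalIdeal A⁰ K → FractionalIdeal A⁰ K
  star_one : star 1 = 1
  star_smul : ∀ (x : K), x ≠ 0 → ∀ I : FractionalIdeal A⁰ K, I ≠ 0 →
    star (FractionalIdeal.spanSingleton A⁰ x * I) = FractionalIdeal.spanSingleton A⁰ x * star I
  le_star : ∀ I : FractionalIdeal A⁰ K, I ≠ 0 → I ≤ star I
  mono : ∀ I J : FractionalIdeal A⁰ K, I ≠ 0 → I ≤ J → star I ≤ star J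
  star_idem : ∀ I : FractionalIdeal A⁰ K, I ≠ 0 → star (star I) = star I

variable {A : Type*} [CommRing A] [IsDomain A]
  {K : Type*} [Field K] [Algebra A K] [IsFractionRing A K]

/-- `⋆` is of finite type: `I^⋆` is the union of the `J^⋆` over the finitely
generated (nonzero) fractional ideals `J ⊆ I`. -/
def StarOperation.IsFiniteType (s : StarOperation A K) : Prop :=
  ∀ I : FractionalIdeal A⁰ K, I ≠ 0 → ∀ x : K, x ∈ s.star I →
    ∃ J : FractionalIdeal A⁰ K, J ≠ 0 ∧ J ≤ I ∧ (J : Submodule A K).FG ∧ x ∈ s.star J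

/-- A (nonzero, integral) ideal `I` is a `⋆`-ideal if `I^⋆ = I`. -/
def IsStarIdeal (s : StarOperation A K) (I : Ideal A) : Prop :=
  I ≠ 0 ∧ s.star ↑I = (I : FractionalIdeal A⁰ K)

/-- A (nonzero, integral) ideal `I` is `⋆`-finite if `J^⋆ = I^⋆` for some finitely
generated (nonzero) ideal `J`. -/
def IsStarFinite (s : StarOperation A K) (I : Ideal A) : Prop :=
  I ≠ 0 ∧ ∃ J : Ideal A, J ≠ 0 ∧ J.FG ∧ s.star ↑J = s.star (I : FractionalIdeal A⁰ K)

/-- An ideal of `A` is `⋆`-maximal if it is maximal among proper `⋆`-ideals. -/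
def IsStarMaximal (s : StarOperation A K) (M : Ideal A) : Prop :=
  M ≠ ⊤ ∧ IsStarIdeal s M ∧ ∀ J : Ideal A, J ≠ ⊤ → IsStarIdeal s J → M ≤ J → J = M

/-- Property (⋆-c.a.): for every pair of proper ⋆-finite ⋆-ideals `𝔞₁, 𝔞₂` containing
`𝔞`, the ideal `(𝔞₁ + 𝔞₂)^⋆` is proper. -/
def StarCA (s : StarOperation A K) (𝔞 : Ideal A) : Prop :=
  ∀ 𝔞₁ 𝔞₂ : Ideal A, 𝔞 ≤ 𝔞₁ → 𝔞 ≤ 𝔞₂ →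
    𝔞₁ ≠ ⊤ → IsStarIdeal s 𝔞₁ → IsStarFinite s 𝔞₁ →
    𝔞₂ ≠ ⊤ → IsStarIdeal s 𝔞₂ → IsStarFinite s 𝔞₂ →
    s.star ↑(𝔞₁ + 𝔞₂) ≠ 1

/-- `ℱ` is a ⋆-comaximal collection over `a`: `a` lies in every member and
`(𝔞₁ + 𝔞₂)^⋆ = A` for all distinct members. -/
def IsStarComaximalOver (s : StarOperation A K) (a : A) (F : Set (Ideal A)) : Prop :=
  (∀ I ∈ F, a ∈ I) ∧ ∀ I ∈ F, ∀ J ∈ F, I ≠ J → s.star ↑(I + J) = 1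

/-- `(Σ')^⋆_a`: the ⋆-comaximal collections over `a` of proper ⋆-finite ⋆-ideals. -/
def SigmaP (s : StarOperation A K) (a : A) : Set (Set (Ideal A)) :=
  {F | IsStarComaximalOver s a F ∧ ∀ I ∈ F, I ≠ ⊤ ∧ IsStarIdeal s I ∧ IsStarFinite s I}

/-- `Σ^⋆_a`: members of `(Σ')^⋆_a` all of whose ideals satisfy (⋆-c.a.). -/
def SigmaCA (s : StarOperation A K) (a : A) : Set (Set (Ideal A)) :=
  {F | F ∈ SigmaP s a ∧ ∀ I ∈ F, StarCA s I}

namespace StarAux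

variable (s : StarOperation A K)

lemma coe_ne_zero {I : Ideal A} (h : I ≠ ⊥) : (I : FractionalIdeal A⁰ K) ≠ 0 :=
  FractionalIdeal.coeIdeal_ne_zero.mpr h

lemma star_le_one {I : FractionalIdeal A⁰ K} (h : I ≠ 0) (h1 : I ≤ 1) : s.star I ≤ 1 := by
  have := s.mono I 1 h h1
  rwa [s.star_one] at this

lemma coe_sup (I J : Ideal A) :
    ((I ⊔ J : Ideal A) : FractionalIdeal A⁰ K) = ↑I ⊔ ↑J := by
  rw [FractionalIdeal.coeIdeal_sup, FractionalIdeal.sup_eq_add]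

lemma star_coe_le_one (I : Ideal A) (h : I ≠ ⊥) :
    s.star (I : FractionalIdeal A⁰ K) ≤ 1 :=
  star_le_one s (coe_ne_zero h) FractionalIdeal.coeIdeal_le_one

lemma star_coe_ne_one_of_proper {I : Ideal A}
    (hSI : s.star ↑I = (I : FractionalIdeal A⁰ K)) (hT : I ≠ ⊤) :
    s.star (I : FractionalIdeal A⁰ K) ≠ 1 := by
  rw [hSI]
  intro h
  exact hT (FractionalIdeal.coeIdeal_injective (h.trans (FractionalIdeal.coeIdeal_top A⁰).symm))

lemma sup_absorb {I J : FractionalIdeal A⁰ K} (hJ : J ≠ 0) :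
    s.star (I ⊔ s.star J) = s.star (I ⊔ J) := by
  by_cases hI : I = 0
  · rw [hI, sup_eq_right.mpr (FractionalIdeal.zero_le _),
      sup_eq_right.mpr (FractionalIdeal.zero_le _), s.star_idem J hJ]
  · have hIJ : I ⊔ J ≠ 0 := fun h => hI (le_antisymm (h ▸ le_sup_left)
      (FractionalIdeal.zero_le _))
    have hIsJ : I ⊔ s.star J ≠ 0 := fun h => hI (le_antisymm (h ▸ le_sup_left)
      (FractionalIdeal.zero_le _))
    refine le_antisymm ?_ (s.mono _ _ hIJ (sup_le_sup_left (s.le_star J hJ) I))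
    have h2 : I ⊔ s.star J ≤ s.star (I ⊔ J) :=
      sup_le (le_sup_left.trans (s.le_star _ hIJ)) (s.mono J _ hJ le_sup_right)
    have := s.mono _ _ hIsJ h2
    rwa [s.star_idem _ hIJ] at this

lemma sup_ne_bot {I 𝔞 : Ideal A} (h𝔞 : 𝔞 ≠ ⊥) : I ⊔ 𝔞 ≠ ⊥ := fun h =>
  h𝔞 (le_bot_iff.mp (h ▸ le_sup_right))

lemma star_sup_eq_one_mono {𝔞 I J : Ideal A} (h𝔞 : 𝔞 ≠ ⊥) (hIJ : I ≤ J)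
    (h : s.star ((I ⊔ 𝔞 : Ideal A) : FractionalIdeal A⁰ K) = 1) :
    s.star ((J ⊔ 𝔞 : Ideal A) : FractionalIdeal A⁰ K) = 1 := by
  refine le_antisymm (star_coe_le_one s _ (sup_ne_bot h𝔞)) ?_
  rw [← h]
  exact s.mono _ _ (coe_ne_zero (sup_ne_bot h𝔞))
    ((FractionalIdeal.coeIdeal_le_coeIdeal K).mpr (sup_le_sup_right hIJ 𝔞))

lemma makeB {𝔞 : Ideal A} (h𝔞0 : 𝔞 ≠ ⊥) (h𝔞T : 𝔞 ≠ ⊤)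
    (hSI : s.star ↑𝔞 = (𝔞 : FractionalIdeal A⁰ K)) (hSF : IsStarFinite s 𝔞)
    (I : Ideal A) (hIfg : I.FG)
    (h : s.star ((I ⊔ 𝔞 : Ideal A) : FractionalIdeal A⁰ K) ≠ 1) :
    ∃ b : Ideal A, (b : FractionalIdeal A⁰ K) = s.star ↑(I ⊔ 𝔞) ∧ I ⊔ 𝔞 ≤ b ∧ b ≠ ⊤ ∧
      IsStarIdeal s b ∧ IsStarFinite s b := by
  have hne : ((I ⊔ 𝔞 : Ideal A) : FractionalIdeal A⁰ K) ≠ 0 := coe_ne_zero (sup_ne_bot h𝔞0)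
  obtain ⟨b, hb⟩ := FractionalIdeal.le_one_iff_exists_coeIdeal.mp
    (star_coe_le_one s _ (sup_ne_bot h𝔞0))
  have hIb : I ⊔ 𝔞 ≤ b := by
    rw [← FractionalIdeal.coeIdeal_le_coeIdeal (K := K), hb]
    exact s.le_star _ hne
  have h𝔞b : 𝔞 ≤ b := le_sup_right.trans hIb
  have hb0 : b ≠ ⊥ := fun hbb => h𝔞0 (le_bot_iff.mp (hbb ▸ h𝔞b))
  have hbT : b ≠ ⊤ := by
    rintro rfl
    exact h (by rw [← hb, FractionalIdeal.coeIdeal_top])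
  have hb0' : b ≠ 0 := by rwa [Submodule.zero_eq_bot]
  have hbSI : s.star ↑b = (b : FractionalIdeal A⁰ K) := by rw [hb, s.star_idem _ hne]
  refine ⟨b, hb, hIb, hbT, ⟨hb0', hbSI⟩, hb0', ?_⟩
  obtain ⟨-, J₀, hJ₀0, hJ₀fg, hJ₀⟩ := hSF
  have hJ₀b : J₀ ≠ ⊥ := by rwa [← Submodule.zero_eq_bot]
  refine ⟨I ⊔ J₀, by
      rw [Submodule.zero_eq_bot]
      exact fun hc => hJ₀b (le_bot_iff.mp (hc ▸ le_sup_right)), Submodule.FG.sup hIfg hJ₀fg, ?_⟩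
  calc s.star ↑(I ⊔ J₀) = s.star ((I : FractionalIdeal A⁰ K) ⊔ ↑J₀) := by rw [coe_sup]
    _ = s.star ((I : FractionalIdeal A⁰ K) ⊔ s.star ↑J₀) :=
        (sup_absorb s (coe_ne_zero hJ₀b)).symm
    _ = s.star ((I : FractionalIdeal A⁰ K) ⊔ ↑𝔞) := by rw [hJ₀, hSI]
    _ = s.star ↑(I ⊔ 𝔞) := by rw [coe_sup]
    _ = s.star ↑b := by rw [hb, s.star_idem _ hne]

lemma star_sup_ne_one_add {𝔞 : Ideal A} (h𝔞0 : 𝔞 ≠ ⊥) (h𝔞T : 𝔞 ≠ ⊤)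
    (hSI : s.star ↑𝔞 = (𝔞 : FractionalIdeal A⁰ K)) (hSF : IsStarFinite s 𝔞)
    (hca : StarCA s 𝔞) {I J : Ideal A} (hIfg : I.FG) (hJfg : J.FG)
    (hI : s.star ((I ⊔ 𝔞 : Ideal A) : FractionalIdeal A⁰ K) ≠ 1)
    (hJ : s.star ((J ⊔ 𝔞 : Ideal A) : FractionalIdeal A⁰ K) ≠ 1) :
    s.star ((I ⊔ J ⊔ 𝔞 : Ideal A) : FractionalIdeal A⁰ K) ≠ 1 := by
  obtain ⟨b₁, hb₁, hIb₁, hb₁T, hb₁SI, hb₁SF⟩ := makeB s h𝔞0 h𝔞T hSI hSF I hIfg hI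
  obtain ⟨b₂, hb₂, hJb₂, hb₂T, hb₂SI, hb₂SF⟩ := makeB s h𝔞0 h𝔞T hSI hSF J hJfg hJ
  have hkey := hca b₁ b₂ (le_sup_right.trans hIb₁) (le_sup_right.trans hJb₂)
    hb₁T hb₁SI hb₁SF hb₂T hb₂SI hb₂SF
  rw [Submodule.add_eq_sup] at hkey
  intro hone
  apply hkey
  have hle : I ⊔ J ≤ b₁ ⊔ b₂ :=
    sup_le ((le_sup_left.trans hIb₁).trans le_sup_left)
      ((le_sup_left.trans hJb₂).trans le_sup_right)
  have h2 := star_sup_eq_one_mono s h𝔞0 hle hone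
  rwa [sup_eq_left.mpr ((le_sup_right.trans hIb₁).trans le_sup_left)] at h2

lemma star_sup_ne_one_of_fg {𝔞 : Ideal A} (h𝔞0 : 𝔞 ≠ ⊥) (h𝔞T : 𝔞 ≠ ⊤)
    (hSI : s.star ↑𝔞 = (𝔞 : FractionalIdeal A⁰ K)) (hSF : IsStarFinite s 𝔞)
    (hca : StarCA s 𝔞) {N : Ideal A} (hNfg : N.FG)
    (hN : ∀ x ∈ N, s.star ((Ideal.span {x} ⊔ 𝔞 : Ideal A) : FractionalIdeal A⁰ K) ≠ 1) :
    s.star ((N ⊔ 𝔞 : Ideal A) : FractionalIdeal A⁰ K) ≠ 1 := by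
  have H := Submodule.fg_induction (R := A) (M := A)
    (motive := fun (N : Submodule A A) _ => N.FG ∧
      ((∀ x ∈ N, s.star ((Ideal.span {x} ⊔ 𝔞 : Ideal A) : FractionalIdeal A⁰ K) ≠ 1) →
        s.star ((N ⊔ 𝔞 : Ideal A) : FractionalIdeal A⁰ K) ≠ 1))
    (fun x => ⟨Submodule.fg_span_singleton x,
      fun h => h x (Submodule.mem_span_singleton_self x)⟩)
    (fun M₁ M₂ _ _ h₁ h₂ => ⟨h₁.1.sup h₂.1, fun h =>
      star_sup_ne_one_add s h𝔞0 h𝔞T hSI hSF hca h₁.1 h₂.1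
        (h₁.2 fun x hx => h x (Submodule.mem_sup_left hx))
        (h₂.2 fun x hx => h x (Submodule.mem_sup_right hx))⟩)
    N hNfg
  exact H.2 hN

lemma mem_mset_of_mem {𝔞 M : Ideal A} (h𝔞0 : 𝔞 ≠ ⊥) (hMT : M ≠ ⊤)
    (hMSI : s.star ↑M = (M : FractionalIdeal A⁰ K)) (h𝔞M : 𝔞 ≤ M) {x : A} (hx : x ∈ M) :
    s.star ((Ideal.span {x} ⊔ 𝔞 : Ideal A) : FractionalIdeal A⁰ K) ≠ 1 := by
  intro hone
  have h2 := star_sup_eq_one_mono s h𝔞0 ((Ideal.span_singleton_le_iff_mem _).mpr hx) hone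
  rw [sup_eq_left.mpr h𝔞M] at h2
  exact star_coe_ne_one_of_proper s hMSI hMT h2

lemma exists_mIdeal {𝔞 : Ideal A} (hs : s.IsFiniteType) {a : A} (ha : a ≠ 0) (ha𝔞 : a ∈ 𝔞)
    (h𝔞T : 𝔞 ≠ ⊤) (hSI : s.star ↑𝔞 = (𝔞 : FractionalIdeal A⁰ K)) (hSF : IsStarFinite s 𝔞)
    (hca : StarCA s 𝔞) :
    ∃ m : Ideal A,
      (m : Set A) =
        {x : A | s.star ((Ideal.span {x} ⊔ 𝔞 : Ideal A) : FractionalIdeal A⁰ K) ≠ 1} ∧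
      IsStarMaximal s m ∧ a ∈ m := by
  have h𝔞0 : 𝔞 ≠ ⊥ := fun h => ha (by simpa [h] using ha𝔞)
  have h𝔞ne1 : s.star (𝔞 : FractionalIdeal A⁰ K) ≠ 1 := star_coe_ne_one_of_proper s hSI h𝔞T
  have hself : ∀ x ∈ 𝔞,
      s.star ((Ideal.span {x} ⊔ 𝔞 : Ideal A) : FractionalIdeal A⁰ K) ≠ 1 := by
    intro x hx hone
    have h2 := star_sup_eq_one_mono s h𝔞0 ((Ideal.span_singleton_le_iff_mem _).mpr hx) hone
    rw [sup_idem] at h2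
    exact h𝔞ne1 h2
  have hanti : ∀ {x y : A}, Ideal.span {x} ≤ Ideal.span {y} →
      s.star ((Ideal.span {y} ⊔ 𝔞 : Ideal A) : FractionalIdeal A⁰ K) ≠ 1 →
      s.star ((Ideal.span {x} ⊔ 𝔞 : Ideal A) : FractionalIdeal A⁰ K) ≠ 1 :=
    fun hxy hy hone => hy (star_sup_eq_one_mono s h𝔞0 hxy hone)
  let m : Ideal A :=
    { carrier := {x : A | s.star ((Ideal.span {x} ⊔ 𝔞 : Ideal A) : FractionalIdeal A⁰ K) ≠ 1}
      zero_mem' := hself 0 (zero_mem 𝔞)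
      add_mem' := by
        intro x y hx hy
        have hsum := star_sup_ne_one_add s h𝔞0 h𝔞T hSI hSF hca
          (Submodule.fg_span_singleton x) (Submodule.fg_span_singleton y) hx hy
        intro hone
        apply hsum
        refine star_sup_eq_one_mono s h𝔞0 ?_ hone
        rw [Ideal.span_singleton_le_iff_mem]
        exact Submodule.add_mem_sup (Ideal.mem_span_singleton_self x)
          (Ideal.mem_span_singleton_self y)
      smul_mem' := by
        intro c x hx
        refine hanti ?_ hx
        rw [smul_eq_mul, Ideal.span_singleton_le_span_singleton]
        exact dvd_mul_left x c }
  have ham : a ∈ m := hself a ha𝔞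
  have h𝔞m : 𝔞 ≤ m := hself
  have hm0 : m ≠ ⊥ := fun h => ha (by simpa [h] using ham)
  have hm0' : m ≠ 0 := by rwa [Submodule.zero_eq_bot]
  have hmT : m ≠ ⊤ := by
    intro h
    have h1 : (1 : A) ∈ m := h ▸ Submodule.mem_top
    apply h1
    rw [Ideal.span_singleton_one, top_sup_eq, FractionalIdeal.coeIdeal_top, s.star_one]
  have hmcoe0 : (m : FractionalIdeal A⁰ K) ≠ 0 := coe_ne_zero hm0
  have hmSI : s.star ↑m = (m : FractionalIdeal A⁰ K) := by
    refine le_antisymm ?_ (s.le_star _ hmcoe0)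
    intro ξ hξ
    obtain ⟨J', hJ'0, hJ'le, hJ'fg, hξJ⟩ := hs _ hmcoe0 ξ hξ
    obtain ⟨J, rfl⟩ := FractionalIdeal.le_one_iff_exists_coeIdeal.mp
      (hJ'le.trans FractionalIdeal.coeIdeal_le_one)
    have hJm : J ≤ m := (FractionalIdeal.coeIdeal_le_coeIdeal K).mp hJ'le
    have hJ0 : J ≠ ⊥ := fun h => hJ'0 (by rw [h]; exact FractionalIdeal.coeIdeal_bot)
    have hJfg : J.FG := Submodule.fg_of_fg_map_injective (Algebra.linearMap A K)
      (IsFractionRing.injective A K) hJ'fg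
    have hQ : s.star ((J ⊔ 𝔞 : Ideal A) : FractionalIdeal A⁰ K) ≠ 1 :=
      star_sup_ne_one_of_fg s h𝔞0 h𝔞T hSI hSF hca hJfg (fun x hx => hJm hx)
    obtain ⟨b, hb, hJb, hbT, hbSI, -⟩ := makeB s h𝔞0 h𝔞T hSI hSF J hJfg hQ
    have hξb : ξ ∈ (b : FractionalIdeal A⁰ K) := by
      rw [hb]
      exact s.mono _ _ hJ'0 ((FractionalIdeal.coeIdeal_le_coeIdeal K).mpr le_sup_left) hξJ
    obtain ⟨y, hyb, rfl⟩ := (FractionalIdeal.mem_coeIdeal _).mp hξb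
    refine (FractionalIdeal.mem_coeIdeal _).mpr ⟨y, ?_, rfl⟩
    show s.star ((Ideal.span {y} ⊔ 𝔞 : Ideal A) : FractionalIdeal A⁰ K) ≠ 1
    intro hone
    have h2 := star_sup_eq_one_mono s h𝔞0 ((Ideal.span_singleton_le_iff_mem _).mpr hyb) hone
    rw [sup_eq_left.mpr (le_sup_right.trans hJb)] at h2
    exact star_coe_ne_one_of_proper s hbSI.2 hbT h2
  have hmax : ∀ J : Ideal A, J ≠ ⊤ → IsStarIdeal s J → m ≤ J → J = m := by
    intro Jj hJT hJSI hmJ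
    refine le_antisymm (fun x hx => ?_) hmJ
    exact mem_mset_of_mem s h𝔞0 hJT hJSI.2 (h𝔞m.trans hmJ) hx
  exact ⟨m, rfl, ⟨hmT, ⟨hm0', hmSI⟩, hmax⟩, ham⟩

end StarAux

/-- Let `⋆` be a finite type star operation on `A` and `a ≠ 0`. If there is a finite
collection `ℱ ∈ Σ^⋆_a` which is maximal in `((Σ')^⋆_a, ⊆)`, then the ⋆-maximal ideals
containing `a` are exactly the ideals `𝔪_𝔞 = {x : ((x) + 𝔞)^⋆ ≠ A}` for `𝔞 ∈ ℱ`;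
in particular there are only finitely many of them. -/
theorem star_maximal_ideals_of_maximal_comaximal_family
    (s : StarOperation A K) (hs : s.IsFiniteType) (a : A) (ha : a ≠ 0)
    (F : Set (Ideal A)) (hFfin : F.Finite) (hF : F ∈ SigmaCA s a)
    (hFmax : ∀ G ∈ SigmaP s a, F ⊆ G → G = F) :
    {M : Ideal A | IsStarMaximal s M ∧ a ∈ M} =
      {M : Ideal A | ∃ 𝔞 ∈ F, (M : Set A) = {x : A | s.star ↑(Ideal.span {x} + 𝔞) ≠ 1}} ∧
    {M : Ideal A | IsStarMaximal s M ∧ a ∈ M}.Finite := by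
  classical
  obtain ⟨⟨⟨hmema, hcomax⟩, hproper⟩, hcaF⟩ := hF
  have hT' : ∀ 𝔞 ∈ F, 𝔞 ≠ ⊤ := fun 𝔞 h => (hproper 𝔞 h).1
  have hSI' : ∀ 𝔞 ∈ F, s.star ↑𝔞 = (𝔞 : FractionalIdeal A⁰ K) :=
    fun 𝔞 h => (hproper 𝔞 h).2.1.2
  have hSF' : ∀ 𝔞 ∈ F, IsStarFinite s 𝔞 := fun 𝔞 h => (hproper 𝔞 h).2.2
  have h𝔞0' : ∀ 𝔞 ∈ F, 𝔞 ≠ ⊥ := fun 𝔞 h hb => ha (by simpa [hb] using hmema 𝔞 h)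
  have hmex : ∀ 𝔞 ∈ F, ∃ m : Ideal A,
      (m : Set A) =
        {x : A | s.star ((Ideal.span {x} ⊔ 𝔞 : Ideal A) : FractionalIdeal A⁰ K) ≠ 1} ∧
      IsStarMaximal s m ∧ a ∈ m :=
    fun 𝔞 h𝔞 => StarAux.exists_mIdeal s hs ha (hmema 𝔞 h𝔞) (hT' 𝔞 h𝔞) (hSI' 𝔞 h𝔞)
      (hSF' 𝔞 h𝔞) (hcaF 𝔞 h𝔞)
  choose! mfun hmcar hmmax hmamem using hmex
  have main : ∀ M : Ideal A, IsStarMaximal s M → a ∈ M →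
      ∃ 𝔞 ∈ F, (M : Set A) =
        {x : A | s.star ((Ideal.span {x} ⊔ 𝔞 : Ideal A) : FractionalIdeal A⁰ K) ≠ 1} := by
    intro M hM haM
    obtain ⟨hMT, ⟨hM0, hMSI⟩, hMmax⟩ := hM
    have hMb0 : M ≠ ⊥ := by rwa [← Submodule.zero_eq_bot]
    by_contra hno
    push_neg at hno
    have stepA : ∀ 𝔞 ∈ F, s.star ((M ⊔ 𝔞 : Ideal A) : FractionalIdeal A⁰ K) = 1 := by
      intro 𝔞 h𝔞
      by_contra hne1
      have h𝔞0 := h𝔞0' 𝔞 h𝔞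
      have hsupne : ((M ⊔ 𝔞 : Ideal A) : FractionalIdeal A⁰ K) ≠ 0 :=
        StarAux.coe_ne_zero (StarAux.sup_ne_bot h𝔞0)
      obtain ⟨b, hb⟩ := FractionalIdeal.le_one_iff_exists_coeIdeal.mp
        (StarAux.star_coe_le_one s _ (StarAux.sup_ne_bot h𝔞0))
      have hMb : M ⊔ 𝔞 ≤ b := by
        rw [← FractionalIdeal.coeIdeal_le_coeIdeal (K := K), hb]
        exact s.le_star _ hsupne
      have hbT : b ≠ ⊤ := by
        rintro rfl
        exact hne1 (by rw [← hb, FractionalIdeal.coeIdeal_top])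
      have hb0 : b ≠ 0 := by
        rw [Submodule.zero_eq_bot]
        exact fun h => hMb0 (le_bot_iff.mp (h ▸ (le_sup_left.trans hMb)))
      have hbSI : IsStarIdeal s b := ⟨hb0, by rw [hb, s.star_idem _ hsupne]⟩
      have hbM : b = M := hMmax b hbT hbSI (le_sup_left.trans hMb)
      have h𝔞M : 𝔞 ≤ M := hbM ▸ (le_sup_right.trans hMb)
      apply hno 𝔞 h𝔞
      have hMsub : ∀ y ∈ M,
          s.star ((Ideal.span {y} ⊔ 𝔞 : Ideal A) : FractionalIdeal A⁰ K) ≠ 1 :=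
        fun y hy => StarAux.mem_mset_of_mem s h𝔞0 hMT hMSI h𝔞M hy
      have hMm : M ≤ mfun 𝔞 := by
        intro y hy
        have : y ∈ (mfun 𝔞 : Set A) := by
          rw [hmcar 𝔞 h𝔞]
          exact hMsub y hy
        exact this
      have hmM := hMmax (mfun 𝔞) (hmmax 𝔞 h𝔞).1 (hmmax 𝔞 h𝔞).2.1 hMm
      rw [← hmcar 𝔞 h𝔞, ← hmM]
    have stepB : ∀ 𝔞 ∈ F, ∃ D : Ideal A, D.FG ∧ D ≤ M ∧
        s.star ((D ⊔ 𝔞 : Ideal A) : FractionalIdeal A⁰ K) = 1 := by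
      intro 𝔞 h𝔞
      have h𝔞0 := h𝔞0' 𝔞 h𝔞
      have hsupne : ((M ⊔ 𝔞 : Ideal A) : FractionalIdeal A⁰ K) ≠ 0 :=
        StarAux.coe_ne_zero (StarAux.sup_ne_bot h𝔞0)
      have h1 : (1 : K) ∈ s.star ((M ⊔ 𝔞 : Ideal A) : FractionalIdeal A⁰ K) := by
        rw [stepA 𝔞 h𝔞]
        exact FractionalIdeal.one_mem_one _
      obtain ⟨J', hJ'0, hJ'le, hJ'fg, h1J⟩ := hs _ hsupne 1 h1
      obtain ⟨J, rfl⟩ := FractionalIdeal.le_one_iff_exists_coeIdeal.mp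
        (hJ'le.trans FractionalIdeal.coeIdeal_le_one)
      have hJle : J ≤ M ⊔ 𝔞 := (FractionalIdeal.coeIdeal_le_coeIdeal K).mp hJ'le
      have hJfg : J.FG := Submodule.fg_of_fg_map_injective (Algebra.linearMap A K)
        (IsFractionRing.injective A K) hJ'fg
      obtain ⟨T, hT⟩ := hJfg
      have hchoice : ∀ g : A, g ∈ (T : Set A) → ∃ y ∈ M, ∃ z ∈ 𝔞, y + z = g :=
        fun g hg => Submodule.mem_sup.mp (hJle (hT ▸ Submodule.subset_span hg))
      choose! yf hyf zf hzf hyzf using hchoice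
      refine ⟨Ideal.span (yf '' (T : Set A)),
        Submodule.fg_span ((T.finite_toSet).image _), ?_, ?_⟩
      · rw [Ideal.span_le]
        rintro _ ⟨g, hg, rfl⟩
        exact hyf g hg
      · have hJD : J ≤ Ideal.span (yf '' (T : Set A)) ⊔ 𝔞 := by
          rw [← hT, Ideal.span_le]
          intro g hg
          have hg' : g = yf g + zf g := (hyzf g hg).symm
          rw [hg']
          exact Submodule.add_mem_sup (Submodule.subset_span ⟨g, hg, rfl⟩) (hzf g hg)
        refine le_antisymm (StarAux.star_coe_le_one s _ (StarAux.sup_ne_bot h𝔞0)) ?_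
        rw [FractionalIdeal.one_le]
        exact s.mono _ _ hJ'0 ((FractionalIdeal.coeIdeal_le_coeIdeal K).mpr hJD) h1J
    choose! Dfun hDfg hDM hD1 using stepB
    set C : Ideal A := Ideal.span {a} ⊔ hFfin.toFinset.sup Dfun with hC
    have hCfg : C.FG := Submodule.FG.sup (Submodule.fg_span_singleton a)
      (Submodule.fg_finset_sup _ _ fun 𝔞 h𝔞 => hDfg 𝔞 (hFfin.mem_toFinset.mp h𝔞))
    have hCM : C ≤ M := sup_le ((Ideal.span_singleton_le_iff_mem _).mpr haM)
      (Finset.sup_le fun 𝔞 h𝔞 => hDM 𝔞 (hFfin.mem_toFinset.mp h𝔞))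
    have haC : a ∈ C := Submodule.mem_sup_left (Ideal.mem_span_singleton_self a)
    have hC0 : C ≠ ⊥ := fun h => ha (by simpa [h] using haC)
    have hCcoe0 : (C : FractionalIdeal A⁰ K) ≠ 0 := StarAux.coe_ne_zero hC0
    have hCcomax : ∀ 𝔞 ∈ F, s.star ((C ⊔ 𝔞 : Ideal A) : FractionalIdeal A⁰ K) = 1 := by
      intro 𝔞 h𝔞
      exact StarAux.star_sup_eq_one_mono s (h𝔞0' 𝔞 h𝔞)
        ((Finset.le_sup (hFfin.mem_toFinset.mpr h𝔞)).trans le_sup_right) (hD1 𝔞 h𝔞)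
    obtain ⟨b, hb⟩ := FractionalIdeal.le_one_iff_exists_coeIdeal.mp
      (StarAux.star_coe_le_one s C hC0)
    have hCb : C ≤ b := by
      rw [← FractionalIdeal.coeIdeal_le_coeIdeal (K := K), hb]
      exact s.le_star _ hCcoe0
    have hbM : b ≤ M := by
      rw [← FractionalIdeal.coeIdeal_le_coeIdeal (K := K), hb, ← hMSI]
      exact s.mono _ _ hCcoe0 ((FractionalIdeal.coeIdeal_le_coeIdeal K).mpr hCM)
    have hbT : b ≠ ⊤ := fun h => hMT (top_le_iff.mp (h ▸ hbM))
    have hb0 : b ≠ 0 := by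
      rw [Submodule.zero_eq_bot]
      exact fun h => hC0 (le_bot_iff.mp (hCb.trans_eq h))
    have hC0' : C ≠ 0 := by rwa [Submodule.zero_eq_bot]
    have hbSI : IsStarIdeal s b := ⟨hb0, by rw [hb, s.star_idem _ hCcoe0]⟩
    have hbSF : IsStarFinite s b := ⟨hb0, C, hC0', hCfg,
      by rw [hb, s.star_idem _ hCcoe0]⟩
    have hab : a ∈ b := hCb haC
    have hbcomax : ∀ 𝔞 ∈ F, s.star ((b ⊔ 𝔞 : Ideal A) : FractionalIdeal A⁰ K) = 1 := by
      intro 𝔞 h𝔞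
      calc s.star ((b ⊔ 𝔞 : Ideal A) : FractionalIdeal A⁰ K)
          = s.star ((𝔞 : FractionalIdeal A⁰ K) ⊔ s.star ↑C) := by
            rw [StarAux.coe_sup, hb, sup_comm]
        _ = s.star ((𝔞 : FractionalIdeal A⁰ K) ⊔ ↑C) := StarAux.sup_absorb s hCcoe0
        _ = s.star ((C ⊔ 𝔞 : Ideal A) : FractionalIdeal A⁰ K) := by
            rw [sup_comm ((𝔞 : FractionalIdeal A⁰ K)) (↑C), ← StarAux.coe_sup]
        _ = 1 := hCcomax 𝔞 h𝔞
    have hGP : insert b F ∈ SigmaP s a := by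
      refine ⟨⟨?_, ?_⟩, ?_⟩
      · rintro I (rfl | hI)
        · exact hab
        · exact hmema I hI
      · intro I hI Jj hJ hne
        rw [Submodule.add_eq_sup]
        rcases hI with rfl | hI <;> rcases hJ with rfl | hJ
        · exact absurd rfl hne
        · exact hbcomax Jj hJ
        · rw [sup_comm]
          exact hbcomax I hI
        · have := hcomax I hI Jj hJ hne
          rwa [Submodule.add_eq_sup] at this
      · rintro I (rfl | hI)
        · exact ⟨hbT, hbSI, hbSF⟩
        · exact hproper I hI
    have hGF := hFmax _ hGP (Set.subset_insert b F)
    have hbF : b ∈ F := hGF ▸ Set.mem_insert b F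
    have hcontr := hbcomax b hbF
    rw [sup_idem, hbSI.2] at hcontr
    exact hbT (FractionalIdeal.coeIdeal_injective
      (hcontr.trans (FractionalIdeal.coeIdeal_top A⁰).symm))
  have hsetEq : {M : Ideal A | IsStarMaximal s M ∧ a ∈ M} =
      {M : Ideal A | ∃ 𝔞 ∈ F,
        (M : Set A) = {x : A | s.star ↑(Ideal.span {x} + 𝔞) ≠ 1}} := by
    ext M
    simp only [Set.mem_setOf_eq, Submodule.add_eq_sup]
    constructor
    · rintro ⟨hM, haM⟩
      exact main M hM haM
    · rintro ⟨𝔞, h𝔞, hMeq⟩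
      have hMm : M = mfun 𝔞 := SetLike.coe_injective (hMeq.trans (hmcar 𝔞 h𝔞).symm)
      rw [hMm]
      exact ⟨hmmax 𝔞 h𝔞, hmamem 𝔞 h𝔞⟩
  refine ⟨hsetEq, ?_⟩
  rw [hsetEq]
  refine Set.Finite.subset (hFfin.image mfun) ?_
  rintro M ⟨𝔞, h𝔞, hMeq⟩
  have hMm : M = mfun 𝔞 := SetLike.coe_injective (by
    rw [hMeq, hmcar 𝔞 h𝔞]
    simp only [Submodule.add_eq_sup])
  exact ⟨𝔞, h𝔞, hMm.symm⟩
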